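/- Let n, k, r', l be positive integers and ε ∈ (0,1) with r' ≤ n/6 and l > max{21·log(n/ε) + 3·log(k/ε) + 6, 2r'}. Consider n − r' + 1 columns, where for each column c the set of its nonzero rows is the image of l independent draws, each uniformly distributed over {1,…,n}, with all draws independent across columns. Then with probability at least 1 − ε/k, for every nonempty proper subset T of these n − r' + 1 columns, the number of rows of {1,…,n} that are nonzero in at least one column of T is at least |T| + r'. -/

import Mathlib

lemma log_six_ge : (1.7:ℝ) ≤ Real.log 6 := by
  rw [Real.le_log_iff_exp_le (by norm_num)]
  by_contra h
  push_neg at h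
  have h10 : Real.exp 1.7 ^ (10:ℕ) = Real.exp 17 := by
    rw [← Real.exp_nat_mul]; norm_num
  have h1 : Real.exp 17 = (Real.exp 1)^(17:ℕ) := by rw [← Real.exp_nat_mul]; norm_num
  have h2 : (Real.exp 1)^(17:ℕ) ≤ (2.7182818286:ℝ)^(17:ℕ) :=
    pow_le_pow_left₀ (Real.exp_pos 1).le Real.exp_one_lt_d9.le 17
  have h3 : (2.7182818286:ℝ)^(17:ℕ) < 6^(10:ℕ) := by norm_num
  have h4 : (6:ℝ)^(10:ℕ) < Real.exp 1.7 ^ (10:ℕ) := by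
    apply pow_lt_pow_left₀ h (by norm_num)
    norm_num
  rw [h10, h1] at h4
  linarith
lemma pow_self_le_factorial_mul_exp (j : ℕ) : (j:ℝ)^j ≤ (Nat.factorial j : ℝ) * Real.exp j := by
  induction j with
  | zero => simp
  | succ j ih =>
    have hje : ((j:ℝ)+1)^j ≤ (j:ℝ)^j * Real.exp 1 := by
      rcases Nat.eq_zero_or_pos j with h | h
      · simp only [h, Nat.cast_zero, pow_zero, zero_add, one_pow]
        nlinarith [Real.one_le_exp (le_refl (0:ℝ)), Real.one_le_exp (zero_le_one (α:=ℝ))]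
      · have hj : (0:ℝ) < j := by exact_mod_cast h
        have h2 : (1:ℝ) + 1/j ≤ Real.exp (1/j) := by
          have := Real.add_one_le_exp (1/(j:ℝ)); linarith
        have h3 : ((j:ℝ)+1)^j = (j:ℝ)^j * (1+1/j)^j := by
          rw [← mul_pow]; congr 1; field_simp
        rw [h3]
        gcongr
        calc ((1:ℝ)+1/j)^j ≤ (Real.exp (1/j))^j := by
              apply pow_le_pow_left₀ (by positivity) h2
          _ = Real.exp (j * (1/j)) := by rw [← Real.exp_nat_mul]
          _ = Real.exp 1 := by rw [mul_one_div, div_self hj.ne']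
    calc ((j+1:ℕ):ℝ)^((j:ℕ)+1) = ((j:ℝ)+1) * ((j:ℝ)+1)^j := by push_cast; ring
      _ ≤ ((j:ℝ)+1) * ((j:ℝ)^j * Real.exp 1) := by
          apply mul_le_mul_of_nonneg_left hje (by positivity)
      _ ≤ ((j:ℝ)+1) * (((Nat.factorial j : ℝ) * Real.exp j) * Real.exp 1) := by
          apply mul_le_mul_of_nonneg_left _ (by positivity)
          apply mul_le_mul_of_nonneg_right ih (Real.exp_pos 1).le
      _ = ((Nat.factorial (j+1) : ℝ)) * Real.exp ((j:ℝ)+1) := by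
          rw [Nat.factorial_succ]; push_cast; rw [Real.exp_add]; ring
      _ = ((Nat.factorial (j+1) : ℝ)) * Real.exp ((j+1:ℕ):ℝ) := by norm_num

lemma choose_le_exp {n j : ℕ} (N' : ℝ) (hj : 1 ≤ j) (hN : (n:ℝ) ≤ N') (hN1 : 1 ≤ N') :
    (n.choose j : ℝ) ≤ Real.exp (j * (1 + Real.log N' - Real.log j)) := by
  have hj0 : (0:ℝ) < j := by exact_mod_cast hj
  have hN0 : (0:ℝ) < N' := by linarith
  have hjj : (0:ℝ) < (j:ℝ)^j := by positivity
  have hfac : (0:ℝ) < (Nat.factorial j : ℝ) := by exact_mod_cast j.factorial_pos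
  have h1 : (n.choose j : ℝ) ≤ (n:ℝ)^j / (Nat.factorial j : ℝ) := by
    have := Nat.choose_le_pow_div (α := ℝ) j n
    simpa using this
  have h2 := pow_self_le_factorial_mul_exp j
  have hexp : Real.exp ((j:ℝ) * (1 + Real.log N' - Real.log j))
      = N'^j * Real.exp j / (j:ℝ)^j := by
    rw [show (j:ℝ) * (1 + Real.log N' - Real.log j)
        = ((j:ℝ) + (j:ℝ) * Real.log N') - (j:ℝ) * Real.log j by ring,
      Real.exp_sub, Real.exp_add, Real.exp_nat_mul, Real.exp_nat_mul,
      Real.exp_log hN0, Real.exp_log hj0]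
    ring
  rw [hexp, le_div_iff₀ hjj]
  calc (n.choose j : ℝ) * (j:ℝ)^j
      ≤ ((n:ℝ)^j / (Nat.factorial j : ℝ)) * ((Nat.factorial j : ℝ) * Real.exp j) := by
        apply mul_le_mul h1 h2 hjj.le (by positivity)
    _ = (n:ℝ)^j * Real.exp j := by field_simp
    _ ≤ N'^j * Real.exp j := by
        apply mul_le_mul_of_nonneg_right _ (Real.exp_pos _).le
        exact pow_le_pow_left₀ (by positivity) hN j


lemma caseA (L R Ln Lk Le A : ℝ) (hA : A ≤ -(1.7)) (h2R : 2*R+1 ≤ L) (hR1 : 1 ≤ R)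
    (hBig : 21*Ln + 3*Lk - 24*Le + 6 ≤ L) (hLn : 0 ≤ Ln) (hLk : 0 ≤ Lk) (hLe : Le ≤ 0) :
    1*(1+Ln) + R*(1 - A) + L*1*A ≤ Le - Lk - Ln := by
  have hL0 : (0:ℝ) ≤ L := by linarith
  have hstep1 : (L - R) * A ≤ (L/2) * A :=
    mul_le_mul_of_nonpos_right (by linarith) (by linarith)
  have hstep2 : (L/2) * A ≤ (L/2) * (-(1.7)) :=
    mul_le_mul_of_nonneg_left hA (by linarith)
  nlinarith [hstep1, hstep2]

lemma caseB (T L S Ln Lk Le A : ℝ) (hT2 : 2 ≤ T) (hS : S ≤ T + L/2) (hS1 : 1 ≤ S)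
    (hA : A ≤ -(0.6931)) (hL41 : 41 ≤ L)
    (hBig : 21*Ln + 3*Lk - 24*Le + 6 ≤ L) (hLn17 : 1.7 ≤ Ln) (hLk : 0 ≤ Lk) (hLe : Le ≤ 0) :
    T*(1+Ln) + S*(1 - A) + L*T*A ≤ Le - Lk - Ln := by
  have hT0 : (0:ℝ) < T := by linarith
  have hL0 : (0:ℝ) ≤ L := by linarith
  have hS1' : 0.75*(T*L) - T ≤ T*L - S := by
    nlinarith [mul_nonneg hL0 (by linarith : (0:ℝ) ≤ T - 2)]
  have hS2' : 0 ≤ 0.75*(T*L) - T := by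
    nlinarith [mul_le_mul_of_nonneg_left hL41 hT0.le]
  have h₁ : (T*L - S)*A ≤ (0.75*(T*L) - T)*(-(0.6931)) :=
    calc (T*L - S)*A ≤ (0.75*(T*L) - T)*A :=
          mul_le_mul_of_nonpos_right hS1' (by linarith)
      _ ≤ (0.75*(T*L) - T)*(-(0.6931)) := mul_le_mul_of_nonneg_left hA hS2'
  have hcoef : 2.6931 + Ln - 0.519825*L ≤ 0 := by linarith
  have h₂ : T*(2.6931 + Ln - 0.519825*L) ≤ 2*(2.6931 + Ln - 0.519825*L) :=
    mul_le_mul_of_nonpos_right hT2 hcoef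
  nlinarith [h₁, h₂]

lemma caseC (T L D N Ln Lk Le A G : ℝ) (hN0 : 0 < N) (hAD : A ≤ -(D/N)) (hTN3 : N/3 ≤ T)
    (hD1 : 1 ≤ D) (hG : 0 ≤ G) (hL41 : 41 ≤ L)
    (hBig : 21*Ln + 3*Lk - 24*Le + 6 ≤ L) (hLn17 : 1.7 ≤ Ln) (hLk : 0 ≤ Lk) (hLe : Le ≤ 0) :
    D*(1 + Ln - G) + D*(1 + Ln - G) + L*T*A ≤ Le - Lk - Ln := by
  have hD0 : (0:ℝ) < D := by linarith
  have hL0 : (0:ℝ) ≤ L := by linarith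
  have hLnUB : Ln ≤ (L-6)/21 := by linarith
  have hT0 : (0:ℝ) < T := lt_of_lt_of_le (by positivity) hTN3
  have hc1 : (L*T)*A ≤ (L*T)*(-(D/N)) :=
    mul_le_mul_of_nonneg_left hAD (mul_nonneg hL0 hT0.le)
  have hc2 : (L*T)*(-(D/N)) ≤ (L*(N/3))*(-(D/N)) := by
    apply mul_le_mul_of_nonpos_right (mul_le_mul_of_nonneg_left hTN3 hL0)
    have : 0 ≤ D/N := by positivity
    linarith
  have hc2' : (L*(N/3))*(-(D/N)) = -(L*D/3) := by field_simp
  have hcoefC : 2 + 2*Ln - L/3 ≤ 0 := by linarith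
  have hc4 : D*(2 + 2*Ln - L/3) ≤ 1*(2 + 2*Ln - L/3) :=
    mul_le_mul_of_nonpos_right hD1 hcoefC
  have hc5 : 0 ≤ D * G := mul_nonneg hD0.le hG
  nlinarith [hc1, hc2, hc4, hc5, hc2']

set_option maxHeartbeats 2000000 in
lemma keybound (n r' l t k : ℕ) (ε : ℝ) (hε0 : 0 < ε) (hε1 : ε < 1) (hk : 1 ≤ k)
    (hn6 : 6 ≤ n) (hr'1 : 1 ≤ r') (hr'n : (r':ℝ) ≤ (n:ℝ)/6) (hlr : 2*r' < l)
    (hll : 21 * (Real.log n - Real.log ε) + 3 * (Real.log k - Real.log ε) + 6 < l)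
    (ht1 : 1 ≤ t) (htm : t ≤ n - r') :
    ((n - r' + 1).choose t : ℝ) * (n.choose (t + r' - 1) : ℝ) *
      (((t + r' - 1 : ℕ) : ℝ)/(n : ℝ))^(l*t) ≤ ε / ((k:ℝ) * n) := by
  have hr'n' : r' ≤ n := by
    have h0 : (0:ℝ) ≤ (n:ℝ) := Nat.cast_nonneg n
    have h6 : (r':ℝ) ≤ (n:ℝ) := le_trans hr'n (by linarith)
    exact_mod_cast h6
  have hs1 : 1 ≤ t + r' - 1 := by omega
  have hsn : t + r' - 1 ≤ n - 1 := by omega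
  have hsn' : t + r' - 1 ≤ n := by omega
  have htm' : t ≤ n - r' + 1 := by omega
  have hd1 : 1 ≤ n - (t + r' - 1) := by omega
  have hmt : n - r' + 1 - t = n - (t + r' - 1) := by omega
  have hS_eq : ((t + r' - 1 : ℕ):ℝ) = (t:ℝ) + (r':ℝ) - 1 := by
    push_cast [Nat.cast_sub (by omega : 1 ≤ t + r')]; ring
  have hD_eq : ((n - (t + r' - 1) : ℕ):ℝ) = (n:ℝ) - ((t + r' - 1 : ℕ):ℝ) := by
    push_cast [Nat.cast_sub hsn']; ring
  have hN6 : (6:ℝ) ≤ (n:ℝ) := by exact_mod_cast hn6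
  have hN0 : (0:ℝ) < (n:ℝ) := by linarith
  have hN1 : (1:ℝ) ≤ (n:ℝ) := by linarith
  have hT1 : (1:ℝ) ≤ (t:ℝ) := by exact_mod_cast ht1
  have hS1 : (1:ℝ) ≤ ((t + r' - 1:ℕ):ℝ) := by exact_mod_cast hs1
  have hS0 : (0:ℝ) < ((t + r' - 1:ℕ):ℝ) := by linarith
  have hD1 : (1:ℝ) ≤ ((n - (t + r' - 1):ℕ):ℝ) := by exact_mod_cast hd1
  have hL2R : 2*(r':ℝ) + 1 ≤ (l:ℝ) := by exact_mod_cast hlr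
  have hR1 : (1:ℝ) ≤ (r':ℝ) := by exact_mod_cast hr'1
  have hLn17 : (1.7:ℝ) ≤ Real.log n :=
    le_trans log_six_ge (Real.log_le_log (by norm_num) hN6)
  have hLk0 : 0 ≤ Real.log k := Real.log_nonneg (by exact_mod_cast hk)
  have hLe0 : Real.log ε < 0 := Real.log_neg hε0 hε1
  have hLbig : 21*Real.log n + 3*Real.log k - 24*Real.log ε + 6 ≤ (l:ℝ) := by linarith
  have hL41 : (41:ℝ) ≤ (l:ℝ) := by linarith
  -- log of the ratio
  have hA_eq : Real.log ((t + r' - 1:ℕ):ℝ)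
      = Real.log (((t + r' - 1:ℕ):ℝ)/(n:ℝ)) + Real.log n := by
    rw [Real.log_div hS0.ne' hN0.ne']; ring
  have ha0 : (0:ℝ) < ((t + r' - 1:ℕ):ℝ)/(n:ℝ) := by positivity
  have hpow : ((((t + r' - 1:ℕ):ℝ))/(n:ℝ))^(l*t)
      = Real.exp (((l:ℝ)*(t:ℝ)) * Real.log (((t + r' - 1:ℕ):ℝ)/(n:ℝ))) := by
    rw [show ((l:ℝ)*(t:ℝ)) * Real.log (((t + r' - 1:ℕ):ℝ)/(n:ℝ))
        = ((l*t : ℕ):ℝ) * Real.log (((t + r' - 1:ℕ):ℝ)/(n:ℝ)) by push_cast; ring,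
      Real.exp_nat_mul, Real.exp_log ha0]
  have hmN : ((n - r' + 1:ℕ):ℝ) ≤ (n:ℝ) := by exact_mod_cast (by omega : n - r' + 1 ≤ n)
  have HC2 : ((n.choose (t + r' - 1)) : ℝ) ≤
      Real.exp (((t + r' - 1:ℕ):ℝ) * (1 + Real.log n - Real.log ((t + r' - 1:ℕ):ℝ))) :=
    choose_le_exp (n:ℝ) hs1 le_rfl hN1
  obtain ⟨e1, e2, hC1e, hC2e, hsum⟩ :
      ∃ e1 e2 : ℝ, (((n - r' + 1).choose t) : ℝ) ≤ Real.exp e1 ∧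
        ((n.choose (t + r' - 1)) : ℝ) ≤ Real.exp e2 ∧
        e1 + e2 + ((l:ℝ)*(t:ℝ)) * Real.log (((t + r' - 1:ℕ):ℝ)/(n:ℝ))
          ≤ Real.log ε - Real.log k - Real.log n := by
    rcases le_or_gt (2*(t + r' - 1)) n with hcase | hcase
    · -- s ≤ n/2
      have hahalf : ((t + r' - 1:ℕ):ℝ)/(n:ℝ) ≤ 1/2 := by
        rw [div_le_div_iff₀ hN0 (by norm_num)]
        have h2 : 2*((t + r' - 1:ℕ):ℝ) ≤ (n:ℝ) := by exact_mod_cast hcase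
        linarith
      have hA0 : Real.log (((t + r' - 1:ℕ):ℝ)/(n:ℝ)) ≤ -(0.6931) := by
        have h2 : Real.log (((t + r' - 1:ℕ):ℝ)/(n:ℝ)) ≤ Real.log (1/2) :=
          Real.log_le_log ha0 hahalf
        rw [one_div, Real.log_inv] at h2
        linarith [Real.log_two_gt_d9]
      have HC1 : (((n - r' + 1).choose t) : ℝ) ≤ Real.exp ((t:ℝ) * (1 + Real.log n)) := by
        refine le_trans (choose_le_exp (n:ℝ) ht1 hmN hN1) (Real.exp_le_exp.2 ?_)
        have hlogT : 0 ≤ Real.log (t:ℝ) := Real.log_nonneg hT1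
        have h := mul_nonneg (by linarith : (0:ℝ) ≤ (t:ℝ)) hlogT
        nlinarith [h]
      refine ⟨_, _, HC1, HC2, ?_⟩
      rw [hA_eq]
      rcases eq_or_lt_of_le ht1 with ht1' | ht2
      · have hTeq : (t:ℝ) = 1 := by exact_mod_cast ht1'.symm
        have hSR : ((t + r' - 1:ℕ):ℝ) = (r':ℝ) := by rw [hS_eq, hTeq]; ring
        have hA6 : Real.log (((t + r' - 1:ℕ):ℝ)/(n:ℝ)) ≤ -(1.7) := by
          have ha6 : ((t + r' - 1:ℕ):ℝ)/(n:ℝ) ≤ 1/6 := by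
            rw [hSR, div_le_div_iff₀ hN0 (by norm_num)]; linarith
          have h2 := Real.log_le_log ha0 ha6
          rw [one_div, Real.log_inv] at h2
          linarith [log_six_ge]
        rw [hSR] at hA6
        rw [hTeq, hSR]
        have := caseA (l:ℝ) (r':ℝ) (Real.log n) (Real.log k) (Real.log ε)
          (Real.log ((r':ℝ)/(n:ℝ))) hA6 hL2R hR1 hLbig (by linarith)
          hLk0 hLe0.le
        linarith [this]
      · have hT2 : (2:ℝ) ≤ (t:ℝ) := by exact_mod_cast ht2
        have hSTL : ((t + r' - 1:ℕ):ℝ) ≤ (t:ℝ) + (l:ℝ)/2 := by rw [hS_eq]; linarith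
        have := caseB (t:ℝ) (l:ℝ) ((t + r' - 1:ℕ):ℝ) (Real.log n) (Real.log k)
          (Real.log ε) (Real.log (((t + r' - 1:ℕ):ℝ)/(n:ℝ))) hT2 hSTL hS1 hA0 hL41
          hLbig hLn17 hLk0 hLe0.le
        linarith [this]
    · -- s > n/2
      have hAD : Real.log (((t + r' - 1:ℕ):ℝ)/(n:ℝ))
          ≤ -(((n - (t + r' - 1):ℕ):ℝ)/(n:ℝ)) := by
        have h1 := Real.log_le_sub_one_of_pos ha0
        have h2 : ((t + r' - 1:ℕ):ℝ)/(n:ℝ) - 1 = -(((n - (t + r' - 1):ℕ):ℝ)/(n:ℝ)) := by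
          rw [hD_eq]; field_simp; ring
        linarith
      have hTN3 : (n:ℝ)/3 ≤ (t:ℝ) := by
        have hSc : (n:ℝ) + 1 ≤ 2*((t + r' - 1:ℕ):ℝ) := by
          have : n + 1 ≤ 2*(t + r' - 1) := by omega
          exact_mod_cast this
        rw [hS_eq] at hSc
        linarith
      have hlogD : 0 ≤ Real.log ((n - (t + r' - 1):ℕ):ℝ) := Real.log_nonneg hD1
      have HC1 : (((n - r' + 1).choose t) : ℝ) ≤
          Real.exp (((n - (t + r' - 1):ℕ):ℝ) *
            (1 + Real.log n - Real.log ((n - (t + r' - 1):ℕ):ℝ))) := by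
        rw [show (n - r' + 1).choose t = (n - r' + 1).choose (n - r' + 1 - t) from
          (Nat.choose_symm htm').symm, hmt]
        exact choose_le_exp (n:ℝ) hd1 hmN hN1
      have HC2' : ((n.choose (t + r' - 1)) : ℝ) ≤
          Real.exp (((n - (t + r' - 1):ℕ):ℝ) *
            (1 + Real.log n - Real.log ((n - (t + r' - 1):ℕ):ℝ))) := by
        rw [show n.choose (t + r' - 1) = n.choose (n - (t + r' - 1)) from
          (Nat.choose_symm hsn').symm]
        exact choose_le_exp (n:ℝ) hd1 le_rfl hN1
      refine ⟨_, _, HC1, HC2', ?_⟩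
      have := caseC (t:ℝ) (l:ℝ) ((n - (t + r' - 1):ℕ):ℝ) (n:ℝ) (Real.log n) (Real.log k)
        (Real.log ε) (Real.log (((t + r' - 1:ℕ):ℝ)/(n:ℝ)))
        (Real.log ((n - (t + r' - 1):ℕ):ℝ)) hN0 hAD hTN3 hD1 hlogD hL41 hLbig hLn17
        hLk0 hLe0.le
      linarith [this]
  have hfin : Real.exp (Real.log ε - Real.log k - Real.log n) = ε / ((k:ℝ) * n) := by
    rw [Real.exp_sub, Real.exp_sub, Real.exp_log hε0,
      Real.exp_log (by exact_mod_cast hk : (0:ℝ) < (k:ℝ)), Real.exp_log hN0, div_div]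
  calc (((n - r' + 1).choose t) : ℝ) * (n.choose (t + r' - 1) : ℝ) *
        ((((t + r' - 1:ℕ):ℝ))/(n:ℝ))^(l*t)
      ≤ Real.exp e1 * Real.exp e2 *
        Real.exp (((l:ℝ)*(t:ℝ)) * Real.log (((t + r' - 1:ℕ):ℝ)/(n:ℝ))) := by
        rw [hpow]
        apply mul_le_mul_of_nonneg_right _ (Real.exp_pos _).le
        exact mul_le_mul hC1e hC2e (by positivity) (Real.exp_pos _).le
    _ = Real.exp (e1 + e2 + ((l:ℝ)*(t:ℝ)) * Real.log (((t + r' - 1:ℕ):ℝ)/(n:ℝ))) := by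
        rw [← Real.exp_add, ← Real.exp_add]
    _ ≤ Real.exp (Real.log ε - Real.log k - Real.log n) := Real.exp_le_exp.2 hsum
    _ = ε / ((k:ℝ) * n) := hfin

/-- Lemma 16: consider `n − r' + 1` columns, where the set of nonzero rows of column `c`
is the image of `l` i.i.d. draws uniform on `{1,…,n}`, independently across columns
(modelled by the uniform counting probability on `Fin (n-r'+1) → Fin l → Fin n`).
If `r' ≤ n/6` and `l > max{21 log(n/ε) + 3 log(k/ε) + 6, 2r'}`, then with probability at
least `1 − ε/k` every nonempty proper subfamily `T` of columns has at least `|T| + r'`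
distinct nonzero rows. -/
theorem stmt12 (n k r' l : ℕ) (hn : 0 < n) (hk : 0 < k) (hr'0 : 0 < r') (hl0 : 0 < l)
    (ε : ℝ) (hε0 : 0 < ε) (hε1 : ε < 1)
    (hr'n : (r' : ℝ) ≤ (n : ℝ) / 6)
    (hlb : (l : ℝ) > max (21 * Real.log (n / ε) + 3 * Real.log (k / ε) + 6) (2 * r')) :
    1 - ε / k ≤
      (Nat.card {ω : Fin (n - r' + 1) → Fin l → Fin n //
          ∀ T : Finset (Fin (n - r' + 1)), T.Nonempty → T ≠ Finset.univ →
            T.card + r' ≤ (T.biUnion (fun c => Finset.univ.image (ω c))).card} : ℝ) /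
        (Fintype.card (Fin (n - r' + 1) → Fin l → Fin n) : ℝ) := by
  classical
  have hr'nn : r' ≤ n := by
    have h0 : (0:ℝ) ≤ (n:ℝ) := Nat.cast_nonneg n
    have h6 : (r':ℝ) ≤ (n:ℝ) := le_trans hr'n (by linarith)
    exact_mod_cast h6
  have hn6 : 6 ≤ n := by
    have h6 : (6:ℝ) ≤ (n:ℝ) := by
      have : (1:ℝ) ≤ (r':ℝ) := by exact_mod_cast hr'0
      linarith
    exact_mod_cast h6
  have hlr : 2*r' < l := by
    have := lt_of_le_of_lt (le_max_right _ _) hlb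
    exact_mod_cast this
  have hll : 21 * (Real.log n - Real.log ε) + 3 * (Real.log k - Real.log ε) + 6 < (l:ℝ) := by
    have := lt_of_le_of_lt (le_max_left _ _) hlb
    rwa [Real.log_div (by positivity : ((n:ℝ)) ≠ 0) hε0.ne',
      Real.log_div (by positivity : ((k:ℝ)) ≠ 0) hε0.ne'] at this
  set m : ℕ := n - r' + 1 with hm_def
  set P : (Fin m → Fin l → Fin n) → Prop := fun ω =>
    ∀ T : Finset (Fin m), T.Nonempty → T ≠ Finset.univ →
      T.card + r' ≤ (T.biUnion (fun c => Finset.univ.image (ω c))).card with hP_def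
  -- the events
  set A : Finset (Fin m) → Finset (Fin n) → Finset (Fin m → Fin l → Fin n) :=
    fun T S => Fintype.piFinset (fun c => Fintype.piFinset
      (fun _ : Fin l => if c ∈ T then S else Finset.univ)) with hA_def
  have hcardA : ∀ (T : Finset (Fin m)) (S : Finset (Fin n)),
      (A T S).card = S.card ^ (l * T.card) * n ^ (l * (m - T.card)) := by
    intro T S
    rw [hA_def]
    rw [Fintype.card_piFinset]
    have hin : ∀ c : Fin m,
        (Fintype.piFinset fun _ : Fin l => if c ∈ T then S else Finset.univ).card
        = (if c ∈ T then S.card ^ l else n ^ l) := by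
      intro c
      rw [Fintype.card_piFinset]
      by_cases hc : c ∈ T <;> simp [hc, Finset.prod_const, Finset.card_univ]
    rw [Finset.prod_congr rfl (fun c _ => hin c)]
    rw [Finset.prod_ite, Finset.prod_const, Finset.prod_const]
    have h1 : (Finset.filter (fun c => c ∈ T) Finset.univ).card = T.card := by
      rw [Finset.filter_mem_eq_inter, Finset.univ_inter]
    have h2 : (Finset.filter (fun c => ¬ c ∈ T) Finset.univ).card = m - T.card := by
      rw [Finset.filter_not, Finset.filter_mem_eq_inter, Finset.univ_inter,
        Finset.card_sdiff_of_subset (Finset.subset_univ T), Finset.card_univ, Fintype.card_fin]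
    rw [h1, h2, ← pow_mul, ← pow_mul]
  -- Bad events cover
  set Bad : Finset (Fin m → Fin l → Fin n) := Finset.univ.filter (fun ω => ¬ P ω) with hBad_def
  have hsubset : Bad ⊆ (Finset.Icc 1 (m-1)).biUnion (fun t =>
      (Finset.powersetCard t (Finset.univ : Finset (Fin m))).biUnion (fun T =>
        (Finset.powersetCard (t + r' - 1) (Finset.univ : Finset (Fin n))).biUnion
          (fun S => A T S))) := by
    intro ω hω
    rw [hBad_def, Finset.mem_filter] at hω
    simp only [hP_def] at hω
    push_neg at hω
    obtain ⟨T, hTne, hTuniv, hTlt⟩ := hω.2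
    have ht1 : 1 ≤ T.card := Finset.card_pos.2 hTne
    have htm1 : T.card ≤ m - 1 := by
      have hss : T ⊂ Finset.univ := (Finset.ssubset_iff_subset_ne).2 ⟨Finset.subset_univ T, hTuniv⟩
      have := Finset.card_lt_card hss
      rw [Finset.card_univ, Fintype.card_fin] at this
      omega
    have hrows : (T.biUnion (fun c => Finset.univ.image (ω c))).card ≤ T.card + r' - 1 := by
      omega
    have hcardle : T.card + r' - 1 ≤ (Finset.univ : Finset (Fin n)).card := by
      rw [Finset.card_univ, Fintype.card_fin]; omega
    obtain ⟨S, hrowsS, _, hScard⟩ := Finset.exists_subsuperset_card_eq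
      (Finset.subset_univ (T.biUnion (fun c => Finset.univ.image (ω c)))) hrows hcardle
    rw [Finset.mem_biUnion]
    refine ⟨T.card, Finset.mem_Icc.2 ⟨ht1, htm1⟩, ?_⟩
    rw [Finset.mem_biUnion]
    refine ⟨T, Finset.mem_powersetCard_univ.2 rfl, ?_⟩
    rw [Finset.mem_biUnion]
    refine ⟨S, Finset.mem_powersetCard_univ.2 hScard, ?_⟩
    rw [hA_def, Fintype.mem_piFinset]
    intro c
    rw [Fintype.mem_piFinset]
    intro i
    by_cases hc : c ∈ T
    · simp only [hc, if_true]
      exact hrowsS (Finset.mem_biUnion.2 ⟨c, hc, Finset.mem_image_of_mem _ (Finset.mem_univ i)⟩)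
    · simp [hc]
  -- counting
  have hBadcard : Bad.card ≤ ∑ t ∈ Finset.Icc 1 (m-1),
      (m.choose t) * ((n.choose (t + r' - 1)) * ((t + r' - 1) ^ (l*t) * n ^ (l*(m - t)))) := by
    refine le_trans (Finset.card_le_card hsubset) ?_
    refine le_trans (Finset.card_biUnion_le) (Finset.sum_le_sum (fun t ht => ?_))
    refine le_trans (Finset.card_biUnion_le) ?_
    have hstep : ∀ T ∈ Finset.powersetCard t (Finset.univ : Finset (Fin m)),
        ((Finset.powersetCard (t + r' - 1) (Finset.univ : Finset (Fin n))).biUnion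
          (fun S => A T S)).card ≤ (n.choose (t + r' - 1)) * ((t + r' - 1) ^ (l*t) * n ^ (l*(m - t))) := by
      intro T hT
      have hTcard : T.card = t := Finset.mem_powersetCard_univ.1 hT
      refine le_trans (Finset.card_biUnion_le) ?_
      have hterm : ∀ S ∈ Finset.powersetCard (t + r' - 1) (Finset.univ : Finset (Fin n)),
          (A T S).card = (t + r' - 1) ^ (l*t) * n ^ (l*(m - t)) := by
        intro S hS
        rw [hcardA T S, Finset.mem_powersetCard_univ.1 hS, hTcard]
      rw [Finset.sum_congr rfl hterm, Finset.sum_const, Finset.card_powersetCard,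
        Finset.card_univ, Fintype.card_fin, smul_eq_mul]
    refine le_trans (Finset.sum_le_sum hstep) ?_
    rw [Finset.sum_const, Finset.card_powersetCard, Finset.card_univ, Fintype.card_fin,
      smul_eq_mul]
  -- real-valued bound on Bad
  have hk1 : 1 ≤ k := hk
  have hN0 : (0:ℝ) < (n:ℝ) := by exact_mod_cast hn
  have hK0 : (0:ℝ) < (k:ℝ) := by exact_mod_cast hk
  have hX0 : (0:ℝ) < ((n:ℝ))^(l*m) := by positivity
  have hterm : ∀ t ∈ Finset.Icc 1 (m-1),
      ((m.choose t : ℕ):ℝ) * ((n.choose (t + r' - 1) : ℕ):ℝ) *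
        (((t + r' - 1:ℕ):ℝ)^(l*t) * ((n:ℝ))^(l*(m - t)))
        ≤ (ε / ((k:ℝ)*n)) * ((n:ℝ))^(l*m) := by
    intro t ht
    rw [Finset.mem_Icc] at ht
    have ht1 : 1 ≤ t := ht.1
    have htm : t ≤ n - r' := by omega
    have hkey := keybound n r' l t k ε hε0 hε1 hk1 hn6 hr'0 hr'n hlr hll ht1 htm
    have hid : (((t + r' - 1:ℕ):ℝ))^(l*t) * ((n:ℝ))^(l*(m - t))
        = ((((t + r' - 1:ℕ):ℝ))/(n:ℝ))^(l*t) * ((n:ℝ))^(l*m) := by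
      have hsplit : ((n:ℝ))^(l*m) = ((n:ℝ))^(l*(m-t)) * ((n:ℝ))^(l*t) := by
        rw [← pow_add, ← Nat.mul_add]
        congr 2
        omega
      rw [div_pow, hsplit]
      field_simp
    calc ((m.choose t : ℕ):ℝ) * ((n.choose (t + r' - 1) : ℕ):ℝ) *
          (((t + r' - 1:ℕ):ℝ)^(l*t) * ((n:ℝ))^(l*(m - t)))
        = (((m.choose t : ℕ):ℝ) * ((n.choose (t + r' - 1) : ℕ):ℝ) *
            ((((t + r' - 1:ℕ):ℝ))/(n:ℝ))^(l*t)) * ((n:ℝ))^(l*m) := by rw [hid]; ring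
      _ ≤ (ε / ((k:ℝ)*n)) * ((n:ℝ))^(l*m) := by
          apply mul_le_mul_of_nonneg_right _ hX0.le
          exact hkey
  have hBadR : (Bad.card : ℝ) ≤ (ε / k) * ((n:ℝ))^(l*m) := by
    have hcast : (Bad.card : ℝ) ≤ ∑ t ∈ Finset.Icc 1 (m-1),
        ((m.choose t : ℕ):ℝ) * ((n.choose (t + r' - 1) : ℕ):ℝ) *
          (((t + r' - 1:ℕ):ℝ)^(l*t) * ((n:ℝ))^(l*(m - t))) := by
      have := hBadcard
      have h2 : ((Bad.card : ℕ):ℝ) ≤ ((∑ t ∈ Finset.Icc 1 (m-1),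
          (m.choose t) * ((n.choose (t + r' - 1)) * ((t + r' - 1) ^ (l*t) * n ^ (l*(m - t)))) : ℕ):ℝ) := by
        exact_mod_cast this
      refine le_trans h2 (le_of_eq ?_)
      push_cast
      refine Finset.sum_congr rfl (fun t _ => by ring)
    refine le_trans hcast ?_
    refine le_trans (Finset.sum_le_sum hterm) ?_
    rw [Finset.sum_const, Nat.card_Icc, nsmul_eq_mul]
    have hm1n : ((m - 1 + 1 - 1 : ℕ):ℝ) ≤ (n:ℝ) := by
      have : m - 1 + 1 - 1 ≤ n := by omega
      exact_mod_cast this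
    have hknn : (0:ℝ) ≤ ε / ((k:ℝ)*n) * ((n:ℝ))^(l*m) := by positivity
    calc ((m - 1 + 1 - 1 : ℕ):ℝ) * (ε / ((k:ℝ)*n) * ((n:ℝ))^(l*m))
        ≤ (n:ℝ) * (ε / ((k:ℝ)*n) * ((n:ℝ))^(l*m)) := by
          apply mul_le_mul_of_nonneg_right hm1n hknn
      _ = (ε / k) * ((n:ℝ))^(l*m) := by field_simp
  -- final assembly
  have htotal : Fintype.card (Fin m → Fin l → Fin n) = n^(l*m) := by
    rw [Fintype.card_fun, Fintype.card_fun, Fintype.card_fin, Fintype.card_fin,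
      Fintype.card_fin, ← pow_mul, mul_comm]
  have hgoodcard : Nat.card {ω : Fin m → Fin l → Fin n // P ω}
      = (Finset.univ.filter P).card := by
    rw [Nat.card_eq_fintype_card, Fintype.card_subtype]
  have hsplit2 : (Finset.univ.filter P).card + Bad.card = n^(l*m) := by
    rw [hBad_def, Finset.card_filter_add_card_filter_not, Finset.card_univ, htotal]
  rw [hgoodcard, htotal]
  rw [le_div_iff₀ (by positivity : (0:ℝ) < ((n^(l*m) : ℕ):ℝ))]
  have hgc : ((Finset.univ.filter P).card : ℝ) = ((n^(l*m) : ℕ):ℝ) - (Bad.card : ℝ) := by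
    have := hsplit2
    have h2 : (((Finset.univ.filter P).card + Bad.card : ℕ):ℝ) = ((n^(l*m):ℕ):ℝ) := by
      exact_mod_cast congrArg (Nat.cast : ℕ → ℝ) this
    push_cast at h2 ⊢
    linarith
  have hXcast : ((n^(l*m) : ℕ):ℝ) = ((n:ℝ))^(l*m) := by push_cast; ring
  rw [hgc, hXcast]
  have hfrac : 0 ≤ ε / (k:ℝ) := by positivity
  nlinarith [hBadR, hX0]
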